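/- Let C be a braided monoidal category with braiding β and A a commutative monoid object, with F(V) = A ⊗ V the free A-module on V. For any V, W in C, the morphism f̄ : F(V ⊗ W) ⟶ F(V) ⊗_A F(W) given by composing id_A ⊗ id_V ⊗ ι ⊗ id_W : A ⊗ V ⊗ W ⟶ (A ⊗ V) ⊗ (A ⊗ W) with the projection π, and the morphism ḡ : F(V) ⊗_A F(W) ⟶ F(V ⊗ W) induced on the coequalizer by (μ ⊗ id_V ⊗ id_W) ∘ (id_A ⊗ β_{A,V}⁻¹ ⊗ id_W) : (A ⊗ V) ⊗ (A ⊗ W) ⟶ A ⊗ V ⊗ W, are well defined mutually inverse isomorphisms of A-modules. Hence the free functor F is a tensor functor from C to (Mod A, ⊗_A). -/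

import Mathlib

open CategoryTheory MonoidalCategory Limits

universe v u

variable {C : Type u} [Category.{v} C] [MonoidalCategory C] [BraidedCategory C]

/-- The free module `F(V) = A ⊗ V` over a monoid object `A`, with action `μ ⊗ id_V`. -/
@[simps]
def freeMod (A : Mon C) (V : C) : Mod C A.X where
  X := A.X ⊗ V
  mod := {
  smul := (α_ A.X A.X V).inv ≫ (MonObj.mul (X := A.X) ▷ V)
  one_smul := by
    change (MonObj.one (X := A.X) ▷ (A.X ⊗ V)) ≫ (α_ A.X A.X V).inv ≫ (MonObj.mul (X := A.X) ▷ V)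
      = (λ_ (A.X ⊗ V)).hom
    rw [associator_inv_naturality_left_assoc, ← comp_whiskerRight, MonObj.one_mul]
    monoidal
  mul_smul := by
    change (MonObj.mul (X := A.X) ▷ (A.X ⊗ V)) ≫ (α_ A.X A.X V).inv ≫ (MonObj.mul (X := A.X) ▷ V)
      = (α_ A.X A.X (A.X ⊗ V)).hom ≫ (A.X ◁ ((α_ A.X A.X V).inv ≫ (MonObj.mul (X := A.X) ▷ V)))
        ≫ (α_ A.X A.X V).inv ≫ (MonObj.mul (X := A.X) ▷ V)
    simp only [MonoidalCategory.whiskerLeft_comp]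
    slice_rhs 3 4 => rw [associator_inv_naturality_middle]
    rw [associator_inv_naturality_left_assoc, ← comp_whiskerRight, MonObj.mul_assoc]
    simp only [comp_whiskerRight, Category.assoc]
    monoidal }

/-- The first of the two morphisms whose coequalizer is `X ⊗_A Y`, namely `μ_X ⊗ id_Y`. -/
def mapOne {A : Mon C} (X Y : Mod C A.X) : (A.X ⊗ X.X) ⊗ Y.X ⟶ X.X ⊗ Y.X :=
  (ModObj.smul (M := A.X) (X := X.X) : A.X ⊗ X.X ⟶ X.X) ▷ Y.X

/-- The second of the two morphisms whose coequalizer is `X ⊗_A Y`, namely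
`(id_X ⊗ μ_Y) ∘ (β_{A,X} ⊗ id_Y)`. -/
def mapTwo {A : Mon C} (X Y : Mod C A.X) : (A.X ⊗ X.X) ⊗ Y.X ⟶ X.X ⊗ Y.X :=
  ((β_ A.X X.X).hom ▷ Y.X) ≫ (α_ X.X A.X Y.X).hom ≫ (X.X ◁ (ModObj.smul (M := A.X) (X := Y.X) : A.X ⊗ Y.X ⟶ Y.X))

variable [HasCoequalizers C]

/-- The underlying object of `X ⊗_A Y`: the coequalizer of `mapOne` and `mapTwo`. -/
noncomputable def tensorQ {A : Mon C} (X Y : Mod C A.X) : C :=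
  coequalizer (mapOne X Y) (mapTwo X Y)

/-- The canonical projection `π_{X,Y} : X ⊗ Y ⟶ X ⊗_A Y`. -/
noncomputable def tensorπ {A : Mon C} (X Y : Mod C A.X) : X.X ⊗ Y.X ⟶ tensorQ X Y :=
  coequalizer.π _ _

/-!
STATEMENT 3: The free functor `F(V) = A ⊗ V` is a tensor functor: the explicit morphisms
`f̄ : F(V ⊗ W) ⟶ F(V) ⊗_A F(W)` and `ḡ : F(V) ⊗_A F(W) ⟶ F(V ⊗ W)` are well defined
mutually inverse isomorphisms of `A`-modules.
-/

/-- The morphism `id_A ⊗ id_V ⊗ ι ⊗ id_W : A ⊗ V ⊗ W ⟶ (A ⊗ V) ⊗ (A ⊗ W)`. -/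
def fbarC (A : Mon C) (V W : C) : A.X ⊗ (V ⊗ W) ⟶ (A.X ⊗ V) ⊗ (A.X ⊗ W) :=
  (A.X ◁ (V ◁ (λ_ W).inv)) ≫ (A.X ◁ (V ◁ (MonObj.one (X := A.X) ▷ W))) ≫ (α_ A.X V (A.X ⊗ W)).inv

/-- The morphism `(μ ⊗ id_V ⊗ id_W) ∘ (id_A ⊗ β_{A,V}⁻¹ ⊗ id_W) :
`(A ⊗ V) ⊗ (A ⊗ W) ⟶ A ⊗ V ⊗ W`. -/
def gbarC (A : Mon C) (V W : C) : (A.X ⊗ V) ⊗ (A.X ⊗ W) ⟶ A.X ⊗ (V ⊗ W) :=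
  (α_ A.X V (A.X ⊗ W)).hom ≫ (A.X ◁ (α_ V A.X W).inv) ≫ (A.X ◁ ((β_ A.X V).inv ▷ W)) ≫
    (A.X ◁ (α_ A.X V W).hom) ≫ (α_ A.X A.X (V ⊗ W)).inv ≫ (MonObj.mul (X := A.X) ▷ (V ⊗ W))

open BraidedCategory

section AuxLemmas

variable (A : Mon C) (V W : C)

private lemma lem_fg : fbarC A V W ≫ gbarC A V W = 𝟙 _ := by
  simp only [fbarC, gbarC, Category.assoc, Iso.inv_hom_id_assoc,
    ← MonoidalCategory.whiskerLeft_comp, ← MonoidalCategory.whiskerLeft_comp_assoc]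
  have inner : V ◁ ((λ_ W).inv ≫ (MonObj.one (X := A.X)) ▷ W) ≫ (α_ V A.X W).inv ≫ (β_ A.X V).inv ▷ W ≫
      (α_ A.X V W).hom = (λ_ (V ⊗ W)).inv ≫ ((MonObj.one (X := A.X)) ▷ (V ⊗ W)) := by
    rw [MonoidalCategory.whiskerLeft_comp, Category.assoc,
      associator_inv_naturality_middle_assoc, ← comp_whiskerRight_assoc,
      braiding_inv_naturality_right, comp_whiskerRight_assoc, associator_naturality_left]
    rw [braiding_inv_tensorUnit_left]
    coherence
  rw [inner]
  simp only [MonoidalCategory.whiskerLeft_comp, Category.assoc]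
  rw [associator_inv_naturality_middle_assoc, ← comp_whiskerRight, MonObj.mul_one]
  coherence

private lemma lem_h (hcomm : (β_ A.X A.X).hom ≫ (MonObj.mul (X := A.X)) = (MonObj.mul (X := A.X))) :
    mapOne (freeMod A V) (freeMod A W) ≫ gbarC A V W
      = mapTwo (freeMod A V) (freeMod A W) ≫ gbarC A V W := by
  show (((α_ A.X A.X V).inv ≫ (MonObj.mul (X := A.X) ▷ V)) ▷ (A.X ⊗ W)) ≫ gbarC A V W = (((β_ A.X (A.X ⊗ V)).hom ▷ (A.X ⊗ W)) ≫ (α_ (A.X ⊗ V) A.X (A.X ⊗ W)).hom ≫ ((A.X ⊗ V) ◁ ((α_ A.X A.X W).inv ≫ (MonObj.mul (X := A.X) ▷ W)))) ≫ gbarC A V W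
  simp only [gbarC]
  have hcomm' : (β_ A.X A.X).inv ≫ (MonObj.mul (X := A.X)) = (MonObj.mul (X := A.X)) := by
    rw [Iso.inv_comp_eq, hcomm]
  rw [← cancel_epi ((β_ A.X (A.X ⊗ V)).inv ▷ (A.X ⊗ W))]
  simp only [Category.assoc]
  -- RHS: kill the braiding
  conv_rhs => rw [← comp_whiskerRight_assoc, Iso.inv_hom_id, id_whiskerRight, Category.id_comp]
  -- LHS: expand the inverse braiding
  conv_lhs => rw [braiding_tensor_right_inv]
  simp only [MonoidalCategory.whiskerLeft_comp, comp_whiskerRight, Category.assoc]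
  -- LHS: cancel associators, use commutativity on β_{A,A}.inv ≫ μ
  slice_lhs 5 6 => rw [← comp_whiskerRight, Iso.hom_inv_id]
  simp only [id_whiskerRight, Category.id_comp, Category.assoc]
  slice_lhs 4 5 => rw [← comp_whiskerRight, ← comp_whiskerRight, hcomm']
  -- LHS: push μ_{ab} rightwards
  slice_lhs 4 5 => rw [associator_naturality_left]
  slice_lhs 5 6 => rw [← whisker_exchange]
  slice_lhs 6 7 => rw [← whisker_exchange]
  slice_lhs 7 8 => rw [← whisker_exchange]
  slice_lhs 8 9 => rw [associator_inv_naturality_left]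
  -- RHS: push μ_{ac} rightwards through gbar
  slice_rhs 3 4 => rw [associator_naturality_right]
  slice_rhs 4 5 => rw [← MonoidalCategory.whiskerLeft_comp, associator_inv_naturality_middle,
    MonoidalCategory.whiskerLeft_comp]
  slice_rhs 5 6 => rw [← MonoidalCategory.whiskerLeft_comp, ← comp_whiskerRight,
    braiding_inv_naturality_right, comp_whiskerRight, MonoidalCategory.whiskerLeft_comp]
  slice_rhs 6 7 => rw [← MonoidalCategory.whiskerLeft_comp, associator_naturality_left,
    MonoidalCategory.whiskerLeft_comp]
  slice_rhs 7 8 => rw [associator_inv_naturality_middle]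
  slice_rhs 8 9 => rw [← comp_whiskerRight,
    show A.X ◁ (MonObj.mul (X := A.X)) ≫ (MonObj.mul (X := A.X)) = (α_ A.X A.X A.X).inv ≫ ((MonObj.mul (X := A.X)) ▷ A.X) ≫ (MonObj.mul (X := A.X)) by
      rw [MonObj.mul_assoc]; simp]
  simp only [braiding_tensor_left_inv, MonoidalCategory.whiskerLeft_comp, comp_whiskerRight,
    Category.assoc]
  monoidal

/-- Move the `A` of the `W`-factor to the far left (inverse braiding), inserting a unit. -/
private def auxM : (A.X ⊗ V) ⊗ (A.X ⊗ W) ⟶ (A.X ⊗ (A.X ⊗ V)) ⊗ (A.X ⊗ W) :=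
  ((A.X ⊗ V) ◁ (A.X ◁ ((λ_ W).inv ≫ ((MonObj.one (X := A.X)) ▷ W)))) ≫
    (α_ (A.X ⊗ V) A.X (A.X ⊗ W)).inv ≫ ((β_ A.X (A.X ⊗ V)).inv ▷ (A.X ⊗ W))

private lemma lem_m_two : auxM A V W ≫ mapTwo (freeMod A V) (freeMod A W) = 𝟙 _ := by
  show auxM A V W ≫ (((β_ A.X (A.X ⊗ V)).hom ▷ (A.X ⊗ W)) ≫ (α_ (A.X ⊗ V) A.X (A.X ⊗ W)).hom ≫ ((A.X ⊗ V) ◁ ((α_ A.X A.X W).inv ≫ (MonObj.mul (X := A.X) ▷ W)))) = 𝟙 ((A.X ⊗ V) ⊗ (A.X ⊗ W))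
  simp only [auxM]
  simp only [Category.assoc, Iso.inv_hom_id_assoc, ← comp_whiskerRight_assoc, Iso.inv_hom_id]
  simp only [id_whiskerRight, Category.id_comp, Iso.inv_hom_id_assoc,
    ← MonoidalCategory.whiskerLeft_comp]
  have unitInner : A.X ◁ ((λ_ W).inv ≫ (MonObj.one (X := A.X)) ▷ W) ≫ (α_ A.X A.X W).inv ≫ (MonObj.mul (X := A.X)) ▷ W
      = 𝟙 (A.X ⊗ W) := by
    simp only [MonoidalCategory.whiskerLeft_comp, Category.assoc]
    rw [associator_inv_naturality_middle_assoc, ← comp_whiskerRight, MonObj.mul_one]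
    coherence
  rw [unitInner, MonoidalCategory.whiskerLeft_id]

private lemma lem_m_one (hcomm : (β_ A.X A.X).hom ≫ (MonObj.mul (X := A.X)) = (MonObj.mul (X := A.X))) :
    auxM A V W ≫ mapOne (freeMod A V) (freeMod A W) = gbarC A V W ≫ fbarC A V W := by
  show auxM A V W ≫ (((α_ A.X A.X V).inv ≫ (MonObj.mul (X := A.X) ▷ V)) ▷ (A.X ⊗ W)) = gbarC A V W ≫ fbarC A V W
  simp only [auxM, gbarC, fbarC]
  have hcomm' : (β_ A.X A.X).inv ≫ (MonObj.mul (X := A.X)) = (MonObj.mul (X := A.X)) := by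
    rw [Iso.inv_comp_eq, hcomm]
  simp only [MonoidalCategory.whiskerLeft_comp, comp_whiskerRight, Category.assoc,
    braiding_tensor_right_inv]
  slice_lhs 8 9 => rw [← comp_whiskerRight, Iso.hom_inv_id]
  simp only [id_whiskerRight, Category.id_comp, Category.assoc]
  slice_lhs 7 8 => rw [← comp_whiskerRight, ← comp_whiskerRight, hcomm']
  slice_lhs 2 3 => rw [associator_inv_naturality_right]
  slice_lhs 3 4 => rw [whisker_exchange]
  slice_lhs 4 5 => rw [whisker_exchange]
  slice_lhs 5 6 => rw [whisker_exchange]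
  slice_lhs 6 7 => rw [whisker_exchange]
  monoidal

private lemma lem_mod :
    (A.X ◁ gbarC A V W) ≫ (ModObj.smul (M := A.X) (X := (freeMod A (V ⊗ W)).X) : A.X ⊗ (freeMod A (V ⊗ W)).X ⟶ (freeMod A (V ⊗ W)).X)
      = (α_ A.X (A.X ⊗ V) (A.X ⊗ W)).inv ≫ mapOne (freeMod A V) (freeMod A W) ≫ gbarC A V W := by
  show (A.X ◁ gbarC A V W) ≫ ((α_ A.X A.X (V ⊗ W)).inv ≫ (MonObj.mul (X := A.X) ▷ (V ⊗ W)))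
      = (α_ A.X (A.X ⊗ V) (A.X ⊗ W)).inv ≫ (((α_ A.X A.X V).inv ≫ (MonObj.mul (X := A.X) ▷ V)) ▷ (A.X ⊗ W)) ≫ gbarC A V W
  simp only [gbarC]
  simp only [MonoidalCategory.whiskerLeft_comp, comp_whiskerRight, Category.assoc]
  rw [associator_inv_naturality_middle_assoc]
  slice_rhs 3 4 => rw [associator_naturality_left]
  slice_rhs 4 5 => rw [← whisker_exchange]
  slice_rhs 5 6 => rw [← whisker_exchange]
  slice_rhs 6 7 => rw [← whisker_exchange]
  slice_rhs 7 8 => rw [associator_inv_naturality_left]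
  slice_rhs 8 9 => rw [← comp_whiskerRight, MonObj.mul_assoc]
  simp only [comp_whiskerRight, Category.assoc, MonoidalCategory.whiskerLeft_comp]
  monoidal

end AuxLemmas

theorem free_is_tensor_functor
    (A : Mon C) (hcomm : (β_ A.X A.X).hom ≫ MonObj.mul (X := A.X) = MonObj.mul (X := A.X)) (V W : C) :
    ∃ h : mapOne (freeMod A V) (freeMod A W) ≫ gbarC A V W
        = mapTwo (freeMod A V) (freeMod A W) ≫ gbarC A V W,
      ∃ actQ : A.X ⊗ tensorQ (freeMod A V) (freeMod A W) ⟶ tensorQ (freeMod A V) (freeMod A W),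
        -- `actQ` is the action of `A` on `F(V) ⊗_A F(W)` descended from the first factor
        ((A.X ◁ tensorπ (freeMod A V) (freeMod A W)) ≫ actQ
            = (α_ A.X (A.X ⊗ V) (A.X ⊗ W)).inv ≫ ((ModObj.smul (M := A.X) (X := (freeMod A V).X) : A.X ⊗ (freeMod A V).X ⟶ (freeMod A V).X) ▷ (A.X ⊗ W))
                ≫ tensorπ (freeMod A V) (freeMod A W)) ∧
        -- `f̄` and `ḡ` are mutually inverse ...
        ((fbarC A V W ≫ tensorπ (freeMod A V) (freeMod A W)) ≫ coequalizer.desc (gbarC A V W) h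
            = 𝟙 (A.X ⊗ (V ⊗ W))) ∧
        (coequalizer.desc (gbarC A V W) h ≫ (fbarC A V W ≫ tensorπ (freeMod A V) (freeMod A W))
            = 𝟙 (tensorQ (freeMod A V) (freeMod A W))) ∧
        -- ... isomorphisms of `A`-modules
        ((ModObj.smul (M := A.X) (X := (freeMod A (V ⊗ W)).X) : A.X ⊗ (freeMod A (V ⊗ W)).X ⟶ (freeMod A (V ⊗ W)).X) ≫ (fbarC A V W ≫ tensorπ (freeMod A V) (freeMod A W))
            = (A.X ◁ (fbarC A V W ≫ tensorπ (freeMod A V) (freeMod A W))) ≫ actQ) := by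
  have h := lem_h A V W hcomm
  have gfπ : gbarC A V W ≫ fbarC A V W ≫ tensorπ (freeMod A V) (freeMod A W)
      = tensorπ (freeMod A V) (freeMod A W) := by
    erw [← Category.assoc, ← lem_m_one A V W hcomm, Category.assoc]
    show _ ≫ _ ≫ coequalizer.π _ _ = coequalizer.π _ _
    erw [coequalizer.condition, ← Category.assoc, lem_m_two, Category.id_comp]
    rfl
  refine ⟨h, (A.X ◁ coequalizer.desc (gbarC A V W) h) ≫ (ModObj.smul (M := A.X) (X := (freeMod A (V ⊗ W)).X) : A.X ⊗ (freeMod A (V ⊗ W)).X ⟶ (freeMod A (V ⊗ W)).X)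
      ≫ fbarC A V W ≫ tensorπ (freeMod A V) (freeMod A W), ?_, ?_, ?_, ?_⟩
  · erw [← MonoidalCategory.whiskerLeft_comp_assoc]
    show (A.X ◁ (coequalizer.π _ _ ≫ _)) ≫ _ = _
    erw [coequalizer.π_desc, ← Category.assoc, lem_mod, Category.assoc, Category.assoc, gfπ]
    rfl
  · erw [Category.assoc]
    show _ ≫ coequalizer.π _ _ ≫ _ = _
    erw [coequalizer.π_desc, lem_fg]
  · apply coequalizer.hom_ext
    show coequalizer.π _ _ ≫ _ ≫ _ = _
    erw [← Category.assoc, coequalizer.π_desc, gfπ]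
    exact (Category.comp_id _).symm
  · have e : (fbarC A V W ≫ tensorπ (freeMod A V) (freeMod A W))
        ≫ coequalizer.desc (gbarC A V W) h = 𝟙 _ := by
      erw [Category.assoc]
      show _ ≫ coequalizer.π _ _ ≫ _ = _
      erw [coequalizer.π_desc, lem_fg]
    erw [← MonoidalCategory.whiskerLeft_comp_assoc, e, MonoidalCategory.whiskerLeft_id,
      Category.id_comp]
    rfl
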